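/- Every permutation in S_{2k} (acting on {-k,...,-1,1,...,k}) can be represented by a word obtained by deleting some letters from the fixed word w_k = u_k u_{k-1} ⋯ u_1, where u_l is a specific reduced word in adjacent transpositions representing the transposition (-l, l). -/

import Mathlib

/-- The adjacent transposition `σ_t` at position `t` (swapping the two pearls
next to cursor position `t`; in coordinates where the `2k` pearls occupy
`{-k, …, k-1}` it is the swap of `t-1` and `t`). -/
def sigmaT (t : ℤ) : Equiv.Perm ℤ := Equiv.swap (t - 1) t

/-- The word `v_l = σ_{-(l-1)} σ_{-(l-2)} ⋯ σ_{l-2}`, representing the cycle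
`(l-1, l-2, …, -l)`. -/
def vWord (l : ℕ) : List (Equiv.Perm ℤ) :=
  (List.range (2 * l - 2)).map fun i => sigmaT (-(l : ℤ) + 1 + i)

/-- The word `u_l = v_l σ_{l-1} v_l⁻¹` (the conjugate of `σ_{l-1}` by `v_l`),
representing the transposition `(-l, l)`. -/
def uWord (l : ℕ) : List (Equiv.Perm ℤ) :=
  vWord l ++ [sigmaT ((l : ℤ) - 1)] ++ (vWord l).reverse

/-- The word `w_k = u_k u_{k-1} ⋯ u_1`. -/
def wWord (k : ℕ) : List (Equiv.Perm ℤ) :=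
  (((List.range k).reverse).map fun i => uWord (i + 1)).flatten


/-! ### Auxiliary machinery -/

/-- The ascending word `σ_i σ_{i+1} ⋯ σ_{i+n-1}`. -/
def ascW (i : ℤ) (n : ℕ) : List (Equiv.Perm ℤ) :=
  (List.range n).map fun m => sigmaT (i + m)

lemma ascW_def (i : ℤ) (n : ℕ) :
    ascW i n = (List.range n).map (fun m : ℕ => sigmaT (i + (m : ℤ))) := by
  simp only [ascW]
  induction List.range n with
  | nil => rfl
  | cons h t ih => simpa using ih

lemma vWord_eq (l : ℕ) : vWord l = ascW (-(l : ℤ) + 1) (2 * l - 2) := rfl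

lemma ascW_append (i : ℤ) (p q : ℕ) :
    ascW i p ++ ascW (i + p) q = ascW i (p + q) := by
  simp only [ascW_def]
  rw [List.range_add, List.map_append, List.map_map]
  congr 1
  apply List.map_congr_left
  intro m _
  simp only [Function.comp_apply]
  congr 1
  push_cast
  ring

lemma ascW_succ (i : ℤ) (n : ℕ) : ascW i (n+1) = ascW i n ++ [sigmaT (i + n)] := by
  simp only [ascW_def]
  rw [List.range_succ, List.map_append, List.map_singleton]

lemma ascW_prod_apply (i : ℤ) (n : ℕ) : ∀ x : ℤ,
    (ascW i n).prod x =
      if i - 1 ≤ x ∧ x ≤ i + n - 2 then x + 1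
      else if x = i + n - 1 then i - 1 else x := by
  induction n with
  | zero =>
    intro x
    simp only [ascW_def, List.range_zero, List.map_nil, List.prod_nil,
      Equiv.Perm.one_apply, Nat.cast_zero]
    split_ifs <;> omega
  | succ n ih =>
    intro x
    rw [ascW_succ, List.prod_append, List.prod_singleton, Equiv.Perm.mul_apply]
    rw [sigmaT, Equiv.swap_apply_def]
    push_cast
    split_ifs with h1 h2 <;> rw [ih] <;> split_ifs <;> omega

lemma ascW_reverse_prod (i : ℤ) (n : ℕ) :
    (ascW i n).reverse.prod = (ascW i n).prod⁻¹ := by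
  rw [List.prod_reverse_noncomm]
  congr 1
  rw [ascW_def, List.map_map]
  congr 1

lemma ascW_reverse_prod_apply (i : ℤ) (n : ℕ) (x : ℤ) :
    (ascW i n).reverse.prod x =
      if i ≤ x ∧ x ≤ i + n - 1 then x - 1
      else if x = i - 1 then i + n - 1 else x := by
  rw [ascW_reverse_prod]
  rw [show ((ascW i n).prod)⁻¹ = ((ascW i n).prod).symm from rfl]
  rw [Equiv.symm_apply_eq, ascW_prod_apply]
  split_ifs <;> omega

lemma ascW_sublist (i : ℤ) (d m n : ℕ) (h : d + m ≤ n) :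
    (ascW (i + d) m).Sublist (ascW i n) := by
  have e : ascW i n = (ascW i d ++ ascW (i + d) m) ++ ascW (i + d + m) (n - d - m) := by
    rw [ascW_append, show ((i:ℤ) + d + m) = i + (d + m : ℕ) by push_cast; ring,
      ascW_append]
    congr 1
    omega
  rw [e]
  exact ((List.sublist_append_right _ _).trans (List.sublist_append_left _ _))

lemma ascW_prefix_sublist (i : ℤ) (m n : ℕ) (h : m ≤ n) :
    (ascW i m).Sublist (ascW i n) := by
  have := ascW_sublist i 0 m n (by omega)
  simpa using this

/-- The key construction: a subword of `uWord K` sending `-K ↦ a` and `K-1 ↦ b`. -/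
lemma key (K : ℕ) (hK : 1 ≤ K) (a b : ℤ)
    (ha : -(K : ℤ) ≤ a ∧ a ≤ (K : ℤ) - 1) (hb : -(K : ℤ) ≤ b ∧ b ≤ (K : ℤ) - 1)
    (hab : a ≠ b) :
    ∃ w : List (Equiv.Perm ℤ), w.Sublist (uWord K) ∧
      w.prod (-(K : ℤ)) = a ∧ w.prod ((K : ℤ) - 1) = b := by
  have hK' : (1 : ℤ) ≤ (K : ℤ) := by exact_mod_cast hK
  by_cases hbtop : b = (K : ℤ) - 1
  ·
    refine ⟨(ascW (-(K : ℤ) + 1) ((a + K).toNat)).reverse, ?_, ?_, ?_⟩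
    · rw [uWord, vWord_eq]
      exact (List.Sublist.reverse
        (ascW_prefix_sublist _ ((a + K).toNat) (2 * K - 2) (by omega))).trans
        (List.sublist_append_right _ _)
    · rw [ascW_reverse_prod_apply]
      split_ifs <;> omega
    · rw [ascW_reverse_prod_apply]
      split_ifs <;> omega
  ·
    obtain ⟨c, hc⟩ : ∃ c : ℤ,
        (a = (K : ℤ) - 1 ∧ c = (K : ℤ) - 2) ∨ (a < b ∧ c = a) ∨ (b < a ∧ c = a - 1) := by
      by_cases h1 : a = (K : ℤ) - 1
      · exact ⟨(K : ℤ) - 2, Or.inl ⟨h1, rfl⟩⟩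
      · rcases lt_or_gt_of_ne hab with h | h
        · exact ⟨a, Or.inr (Or.inl ⟨h, rfl⟩)⟩
        · exact ⟨a - 1, Or.inr (Or.inr ⟨h, rfl⟩)⟩
    refine ⟨ascW (b + 1) (((K : ℤ) - 2 - b).toNat) ++ [sigmaT ((K : ℤ) - 1)]
        ++ (ascW (-(K : ℤ) + 1) ((c + K).toNat)).reverse, ?_, ?_, ?_⟩
    · rw [uWord]
      apply List.Sublist.append
      apply List.Sublist.append
      · rw [vWord_eq]
        have := ascW_sublist (-(K : ℤ) + 1) ((b + K).toNat) (((K : ℤ) - 2 - b).toNat)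
          (2 * K - 2) (by omega)
        rw [show (-(K : ℤ) + 1 + ((b + K).toNat : ℤ)) = b + 1 by omega] at this
        exact this
      · exact List.Sublist.refl _
      · rw [vWord_eq]
        exact List.Sublist.reverse (ascW_prefix_sublist _ _ _ (by omega))
    · rw [List.prod_append, List.prod_append, List.prod_singleton,
        Equiv.Perm.mul_apply, Equiv.Perm.mul_apply, ascW_reverse_prod_apply,
        sigmaT, Equiv.swap_apply_def]
      split_ifs <;> rw [ascW_prod_apply] <;> split_ifs <;> omega
    · rw [List.prod_append, List.prod_append, List.prod_singleton,
        Equiv.Perm.mul_apply, Equiv.Perm.mul_apply, ascW_reverse_prod_apply,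
        sigmaT, Equiv.swap_apply_def]
      split_ifs <;> rw [ascW_prod_apply] <;> split_ifs <;> omega

lemma wWord_succ (k : ℕ) : wWord (k + 1) = uWord (k + 1) ++ wWord k := by
  simp [wWord, List.range_succ]

lemma mem_uWord {l : ℕ} (hl : 1 ≤ l) {q : Equiv.Perm ℤ} (h : q ∈ uWord l) :
    ∃ t : ℤ, q = sigmaT t ∧ -(l : ℤ) + 1 ≤ t ∧ t ≤ (l : ℤ) - 1 := by
  simp only [uWord, List.mem_append, List.mem_reverse] at h
  have hv : q ∈ vWord l → ∃ t : ℤ, q = sigmaT t ∧ -(l : ℤ) + 1 ≤ t ∧ t ≤ (l : ℤ) - 1 := by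
    intro hq
    rw [vWord_eq, ascW_def, List.mem_map] at hq
    obtain ⟨m, hm, rfl⟩ := hq
    rw [List.mem_range] at hm
    exact ⟨_, rfl, by omega, by omega⟩
  rcases h with (h | h) | h
  · exact hv h
  · exact ⟨(l : ℤ) - 1, by simpa using h, by omega, le_refl _⟩
  · exact hv h

lemma prod_fix {L : List (Equiv.Perm ℤ)} {x : ℤ} (h : ∀ q ∈ L, q x = x) :
    L.prod x = x := by
  induction L with
  | nil => rfl
  | cons p t ih =>
    rw [List.prod_cons, Equiv.Perm.mul_apply, ih (fun q hq => h q (List.mem_cons_of_mem _ hq)),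
      h p List.mem_cons_self]

/-- Every permutation of the `2k` pearls (supported on `{-k, …, k-1}` in these
coordinates) is represented by a word obtained from `w_k` by deleting some
letters. -/
theorem exists_sublist_word (k : ℕ) (g : Equiv.Perm ℤ)
    (hg : ∀ x : ℤ, g x ≠ x → -(k : ℤ) ≤ x ∧ x ≤ (k : ℤ) - 1) :
    ∃ w' : List (Equiv.Perm ℤ), w'.Sublist (wWord k) ∧ w'.prod = g := by
  induction k generalizing g with
  | zero =>
    refine ⟨[], List.nil_sublist _, ?_⟩
    rw [List.prod_nil]
    ext x
    by_contra h
    have := hg x (fun he => h (by simp [he]))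
    omega
  | succ k ih =>
    set K : ℕ := k + 1 with hKdef
    have himg : ∀ x : ℤ, -(K : ℤ) ≤ x → x ≤ (K : ℤ) - 1 →
        -(K : ℤ) ≤ g x ∧ g x ≤ (K : ℤ) - 1 := by
      intro x h1 h2
      by_cases he : g x = x
      · rw [he]; exact ⟨h1, h2⟩
      · by_cases he2 : g (g x) = g x
        · exact absurd (g.injective he2) he
        · exact hg (g x) he2
    have hK1 : (1 : ℤ) ≤ (K : ℤ) := by omega
    have ha := himg (-(K : ℤ)) (le_refl _) (by omega)
    have hb := himg ((K : ℤ) - 1) (by omega) (le_refl _)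
    have hab : g (-(K : ℤ)) ≠ g ((K : ℤ) - 1) := by
      intro he
      have := g.injective he
      omega
    obtain ⟨w, hwsub, hwa, hwb⟩ := key K (by omega) _ _ ha hb hab
    set g' : Equiv.Perm ℤ := w.prod⁻¹ * g with hg'def
    have hfix : ∀ x : ℤ, (x < -(K : ℤ) ∨ (K : ℤ) - 1 < x) → w.prod x = x := by
      intro x hx
      apply prod_fix
      intro q hq
      obtain ⟨t, rfl, ht1, ht2⟩ := mem_uWord (by omega) (hwsub.subset hq)
      rw [sigmaT, Equiv.swap_apply_of_ne_of_ne (by omega) (by omega)]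
    have hg' : ∀ x : ℤ, g' x ≠ x → -(k : ℤ) ≤ x ∧ x ≤ (k : ℤ) - 1 := by
      intro x hx
      by_contra hcon
      apply hx
      rw [hg'def, Equiv.Perm.mul_apply]
      by_cases hxK : x = -(K : ℤ)
      · rw [hxK, ← hwa, Equiv.Perm.inv_def, Equiv.symm_apply_apply]
      · by_cases hxK2 : x = (K : ℤ) - 1
        · rw [hxK2, ← hwb, Equiv.Perm.inv_def, Equiv.symm_apply_apply]
        · have hout : x < -(K : ℤ) ∨ (K : ℤ) - 1 < x := by omega
          have hgx : g x = x := by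
            by_contra hgx
            have := hg x hgx
            omega
          rw [hgx]
          have := hfix x hout
          rw [← this, Equiv.Perm.inv_def, Equiv.symm_apply_apply, this]
    obtain ⟨w'', hsub'', hprod''⟩ := ih g' hg'
    refine ⟨w ++ w'', ?_, ?_⟩
    · rw [wWord_succ]
      exact List.Sublist.append hwsub hsub''
    · rw [List.prod_append, hprod'', hg'def]
      group
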